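/- Let H be a real Hilbert space and let C ⊆ H be a nonempty, closed, convex set containing 0. Then a function f ∈ Γ0(H) satisfies ‖prox_f(x)‖ = d_C(x) for all x ∈ H if and only if f equals the support function σ_C of C up to an additive constant. -/

import Mathlib

open scoped InnerProductSpace
noncomputable section

variable {H : Type*} [NormedAddCommGroup H] [InnerProductSpace ℝ H] [CompleteSpace H]

/-- Convexity for extended-real-valued functions on a real Hilbert space. -/
def ERealConvexOn (f : H → EReal) : Prop :=
  ∀ x y : H, ∀ a b : ℝ, 0 ≤ a → 0 ≤ b → a + b = 1 →
    f (a • x + b • y) ≤ (a : EReal) * f x + (b : EReal) * f y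

/-- `f ∈ Γ₀(H)`: proper (never `⊥`, not identically `⊤`), convex and lower semicontinuous. -/
def Gamma0 (f : H → EReal) : Prop :=
  (∃ x, f x ≠ ⊤) ∧ (∀ x, f x ≠ ⊥) ∧ ERealConvexOn f ∧ LowerSemicontinuous f

/-- `p` is the proximal point of `f` at `x`, i.e. `p` minimizes `y ↦ f y + (1/2)‖x - y‖²`. -/
def IsProx (f : H → EReal) (x p : H) : Prop :=
  ∀ y : H, f p + (((1:ℝ)/2 * ‖x - p‖ ^ 2 : ℝ) : EReal)
    ≤ f y + (((1:ℝ)/2 * ‖x - y‖ ^ 2 : ℝ) : EReal)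

/-- The Fenchel (Legendre-Fenchel) conjugate of `f`. -/
def fenchel (f : H → EReal) (p : H) : EReal :=
  ⨆ v : H, ((⟪p, v⟫_ℝ : ℝ) : EReal) - f v

/-- The support function of a set `C ⊆ H`. -/
def suppFn (C : Set H) (x : H) : EReal :=
  ⨆ y : C, ((⟪(y : H), x⟫_ℝ : ℝ) : EReal)

/-- A proximal point has finite (non-`⊤`) value. -/
lemma isProx_ne_top {f : H → EReal} (hf : Gamma0 f) {x p : H} (h : IsProx f x p) :
    f p ≠ ⊤ := by
  obtain ⟨y₀, hy₀⟩ := hf.1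
  intro htop
  have h1 := h y₀
  rw [htop, EReal.top_add_coe, ← EReal.coe_toReal hy₀ (hf.2.1 y₀), ← EReal.coe_add] at h1
  exact (EReal.coe_lt_top _).not_ge h1

/-- Subgradient inequality at a proximal point: `x - p ∈ ∂f(p)`. -/
lemma isProx_subgrad {f : H → EReal} (hf : Gamma0 f) {x p : H} (h : IsProx f x p) (y : H) :
    f p + ((⟪x - p, y - p⟫_ℝ : ℝ) : EReal) ≤ f y := by
  have hpt : f p ≠ ⊤ := isProx_ne_top hf h
  set α := (f p).toReal with hα
  have hfp : f p = (α : EReal) := (EReal.coe_toReal hpt (hf.2.1 p)).symm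
  by_cases hyt : f y = ⊤
  · rw [hyt]; exact le_top
  set β := (f y).toReal with hβ
  have hfy : f y = (β : EReal) := (EReal.coe_toReal hyt (hf.2.1 y)).symm
  rw [hfp, hfy, ← EReal.coe_add, EReal.coe_le_coe_iff]
  have key : ∀ t : ℝ, 0 < t → t ≤ 1 →
      α + ⟪x - p, y - p⟫_ℝ ≤ β + t / 2 * ‖y - p‖ ^ 2 := by
    intro t ht ht1
    have hcv := hf.2.2.1 y p t (1 - t) ht.le (by linarith) (by ring)
    have hyt_eq : t • y + (1 - t) • p = p + t • (y - p) := by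
      simp only [smul_sub, sub_smul, one_smul]; abel
    rw [hyt_eq, hfy, hfp, ← EReal.coe_mul, ← EReal.coe_mul, ← EReal.coe_add] at hcv
    have hne : f (p + t • (y - p)) ≠ ⊤ := ne_top_of_le_ne_top (EReal.coe_ne_top _) hcv
    set γ := (f (p + t • (y - p))).toReal with hγ
    have hfγ : f (p + t • (y - p)) = (γ : EReal) :=
      (EReal.coe_toReal hne (hf.2.1 _)).symm
    have hγle : γ ≤ t * β + (1 - t) * α := by rwa [hfγ, EReal.coe_le_coe_iff] at hcv
    have hpx := h (p + t • (y - p))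
    rw [hfp, hfγ, ← EReal.coe_add, ← EReal.coe_add, EReal.coe_le_coe_iff] at hpx
    have hxe : x - (p + t • (y - p)) = (x - p) - t • (y - p) := by abel
    have hnorm : ‖(x - p) - t • (y - p)‖ ^ 2
        = ‖x - p‖ ^ 2 - 2 * (t * ⟪x - p, y - p⟫_ℝ) + t ^ 2 * ‖y - p‖ ^ 2 := by
      rw [norm_sub_sq_real, real_inner_smul_right, norm_smul, Real.norm_eq_abs,
        abs_of_pos ht, mul_pow]
    rw [hxe, hnorm] at hpx
    nlinarith [hpx, hγle, ht, mul_pos ht ht]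
  by_contra hcon
  push_neg at hcon
  set δ := α + ⟪x - p, y - p⟫_ℝ - β with hδ
  have hδpos : 0 < δ := by linarith
  set K := ‖y - p‖ ^ 2 with hK
  have hKnn : 0 ≤ K := sq_nonneg _
  set t := min 1 (δ / (K + 1)) with htdef
  have ht : 0 < t := lt_min one_pos (div_pos hδpos (by positivity))
  have ht1 : t ≤ 1 := min_le_left _ _
  have h2 := key t ht ht1
  have htle : t ≤ δ / (K + 1) := min_le_right _ _
  have h3 : t * (K + 1) ≤ δ := (le_div_iff₀ (by positivity)).1 htle
  nlinarith [mul_nonneg ht.le hKnn]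

/-- Proximal points are unique. -/
lemma isProx_unique {f : H → EReal} (hf : Gamma0 f) {x p q : H}
    (hp : IsProx f x p) (hq : IsProx f x q) : p = q := by
  have h1 := isProx_subgrad hf hp q
  have h2 := isProx_subgrad hf hq p
  have hpt := isProx_ne_top hf hp
  have hqt := isProx_ne_top hf hq
  rw [← EReal.coe_toReal hpt (hf.2.1 p), ← EReal.coe_toReal hqt (hf.2.1 q),
    ← EReal.coe_add, EReal.coe_le_coe_iff] at h1 h2
  have e1 : ⟪x - q, p - q⟫_ℝ = - ⟪x - q, q - p⟫_ℝ := by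
    rw [← inner_neg_right]; congr 1; abel
  have e2 : ⟪x - p, q - p⟫_ℝ - ⟪x - q, q - p⟫_ℝ = ⟪q - p, q - p⟫_ℝ := by
    rw [← inner_sub_left]; congr 1; abel
  have key : ⟪q - p, q - p⟫_ℝ ≤ 0 := by linarith
  rw [real_inner_self_eq_norm_sq] at key
  have : ‖q - p‖ = 0 := by nlinarith [norm_nonneg (q - p)]
  have : q - p = 0 := norm_eq_zero.1 this
  have : q = p := by rwa [sub_eq_zero] at this
  exact this.symm

/-- If `q ∈ ∂f(0)` then `0` is the proximal point of `f` at `q`. -/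
lemma subgrad_isProx {f : H → EReal} (hf : Gamma0 f) {q : H} {a : ℝ}
    (hfa : f 0 = (a : EReal))
    (h : ∀ y : H, ((a + ⟪q, y⟫_ℝ : ℝ) : EReal) ≤ f y) : IsProx f q 0 := by
  intro y
  by_cases hyt : f y = ⊤
  · rw [hyt, EReal.top_add_coe]; exact le_top
  set β := (f y).toReal with hβ
  have hfy : f y = (β : EReal) := (EReal.coe_toReal hyt (hf.2.1 y)).symm
  have hb : a + ⟪q, y⟫_ℝ ≤ β := by
    have := h y; rw [hfy, EReal.coe_le_coe_iff] at this; exact this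
  rw [hfa, hfy, ← EReal.coe_add, ← EReal.coe_add, EReal.coe_le_coe_iff, sub_zero]
  have hexp : ‖q - y‖ ^ 2 = ‖q‖ ^ 2 - 2 * ⟪q, y⟫_ℝ + ‖y‖ ^ 2 := norm_sub_sq_real q y
  nlinarith [sq_nonneg ‖y‖]

/-- A function `f ∈ Γ₀(H)` satisfies `‖prox_f x‖ = d_C x` for all `x` if and only if `f` is the
support function of `C` up to an additive constant. -/
theorem prox_norm_eq_dist_iff_suppFn_add_const
    (C : Set H) (hCne : C.Nonempty) (hCcl : IsClosed C) (hCco : Convex ℝ C)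
    (h0 : (0 : H) ∈ C)
    (f : H → EReal) (hf : Gamma0 f)
    (proxf : H → H) (hproxf : ∀ x, IsProx f x (proxf x)) :
    (∀ x : H, ‖proxf x‖ = Metric.infDist x C) ↔
      ∃ c : ℝ, ∀ x, f x = suppFn C x + (c : EReal) := by
  have hsupp_bot : ∀ y : H, ((0 : ℝ) : EReal) ≤ suppFn C y := by
    intro y
    have : ((⟪((⟨0, h0⟩ : C) : H), y⟫_ℝ : ℝ) : EReal) ≤ suppFn C y :=
      le_iSup (fun z : C => ((⟪(z : H), y⟫_ℝ : ℝ) : EReal)) ⟨0, h0⟩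
    simpa using this
  constructor
  · intro hnorm
    -- prox at points of C is 0
    have hCprox : ∀ z ∈ C, proxf z = 0 := by
      intro z hz
      have : ‖proxf z‖ = 0 := by rw [hnorm z, Metric.infDist_zero_of_mem hz]
      simpa [norm_eq_zero] using this
    have hf0top : f 0 ≠ ⊤ := by
      have := isProx_ne_top hf (hproxf 0)
      rwa [hCprox 0 h0] at this
    set a := (f 0).toReal with ha
    have hfa : f 0 = (a : EReal) := (EReal.coe_toReal hf0top (hf.2.1 0)).symm
    -- C ⊆ ∂f(0)
    have hsub : ∀ z ∈ C, ∀ y : H, ((a + ⟪z, y⟫_ℝ : ℝ) : EReal) ≤ f y := by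
      intro z hz y
      have h1 := isProx_subgrad hf (hproxf z) y
      rw [hCprox z hz, sub_zero, sub_zero, hfa, ← EReal.coe_add] at h1
      exact h1
    -- ∂f(0) ⊆ C
    have hsubC : ∀ q : H, (∀ y : H, ((a + ⟪q, y⟫_ℝ : ℝ) : EReal) ≤ f y) → q ∈ C := by
      intro q hq
      have h1 : IsProx f q 0 := subgrad_isProx hf hfa hq
      have h2 : proxf q = 0 := isProx_unique hf (hproxf q) h1
      have h3 : Metric.infDist q C = 0 := by rw [← hnorm q, h2, norm_zero]
      exact (IsClosed.mem_iff_infDist_zero hCcl hCne).2 h3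
    -- key structure at every point
    have hkey : ∀ x : H, (x - proxf x ∈ C) ∧
        f (proxf x) = ((a + ⟪x - proxf x, proxf x⟫_ℝ : ℝ) : EReal) := by
      intro x
      have hptop : f (proxf x) ≠ ⊤ := isProx_ne_top hf (hproxf x)
      set α := (f (proxf x)).toReal with hα
      have hfα : f (proxf x) = (α : EReal) := (EReal.coe_toReal hptop (hf.2.1 _)).symm
      have h4a : a + ⟪x - proxf x, proxf x⟫_ℝ ≤ α := by
        rcases eq_or_lt_of_le (norm_nonneg (proxf x)) with hp0 | hp0
        · have hp0' : proxf x = 0 := norm_eq_zero.1 hp0.symm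
          have hz := hsub 0 h0 (proxf x)
          rw [hfα, EReal.coe_le_coe_iff] at hz
          rw [hp0', inner_zero_right]
          rw [hp0', inner_zero_right] at hz
          linarith
        · by_contra hcon
          push_neg at hcon
          set ε := (a + ⟪x - proxf x, proxf x⟫_ℝ - α) / ‖proxf x‖ with hε
          have hεpos : 0 < ε := div_pos (by linarith) hp0
          obtain ⟨z, hz, hdz⟩ := (Metric.infDist_lt_iff hCne).1
            (show Metric.infDist x C < Metric.infDist x C + ε by linarith)
          have hzp := hsub z hz (proxf x)
          rw [hfα, EReal.coe_le_coe_iff] at hzp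
          have e1 : ⟪x - proxf x, proxf x⟫_ℝ - ⟪z, proxf x⟫_ℝ
              = ⟪x - z, proxf x⟫_ℝ - ‖proxf x‖ ^ 2 := by
            rw [← inner_sub_left, ← real_inner_self_eq_norm_sq, ← inner_sub_left]
            congr 1; abel
          have e2 : ⟪x - z, proxf x⟫_ℝ ≤ ‖x - z‖ * ‖proxf x‖ := real_inner_le_norm _ _
          have e3 : ‖x - z‖ < ‖proxf x‖ + ε := by
            rw [hnorm x, ← dist_eq_norm]; linarith
          have e4 : ε * ‖proxf x‖ = a + ⟪x - proxf x, proxf x⟫_ℝ - α := by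
            rw [hε, div_mul_cancel₀ _ hp0.ne']
          nlinarith
      have h4b : ∀ y : H, ((a + ⟪x - proxf x, y⟫_ℝ : ℝ) : EReal) ≤ f y := by
        intro y
        have h1 := isProx_subgrad hf (hproxf x) y
        rw [hfα, ← EReal.coe_add] at h1
        refine le_trans ?_ h1
        rw [EReal.coe_le_coe_iff, inner_sub_right]
        linarith
      have hqC : x - proxf x ∈ C := hsubC _ h4b
      have h5 : α ≤ a + ⟪x - proxf x, proxf x⟫_ℝ := by
        have h1 := isProx_subgrad hf (hproxf x) 0
        rw [hfα, hfa, ← EReal.coe_add, EReal.coe_le_coe_iff] at h1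
        have e : ⟪x - proxf x, (0:H) - proxf x⟫_ℝ = - ⟪x - proxf x, proxf x⟫_ℝ := by
          rw [zero_sub, inner_neg_right]
        rw [e] at h1
        linarith
      exact ⟨hqC, by rw [hfα, EReal.coe_eq_coe_iff]; exact le_antisymm h5 h4a⟩
    refine ⟨a, fun y => le_antisymm ?_ ?_⟩
    · -- upper bound via lsc
      by_cases hst : suppFn C y = ⊤
      · rw [hst, EReal.top_add_coe]; exact le_top
      have hsbot : suppFn C y ≠ ⊥ := fun hb => by
        have := hsupp_bot y; rw [hb] at this; exact (EReal.bot_lt_coe _).not_ge this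
      set σ := (suppFn C y).toReal with hσdef
      have hσ : suppFn C y = (σ : EReal) := (EReal.coe_toReal hst hsbot).symm
      have hσ0 : 0 ≤ σ := by
        have := hsupp_bot y; rw [hσ, EReal.coe_le_coe_iff] at this; exact this
      have hzσ : ∀ z ∈ C, ⟪z, y⟫_ℝ ≤ σ := by
        intro z hz
        have : ((⟪z, y⟫_ℝ : ℝ) : EReal) ≤ suppFn C y :=
          le_iSup (fun w : C => ((⟪(w : H), y⟫_ℝ : ℝ) : EReal)) ⟨z, hz⟩
        rwa [hσ, EReal.coe_le_coe_iff] at this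
      -- the approximating sequence
      set t : ℕ → ℝ := fun n => ((n + 1 : ℕ) : ℝ) with htdef
      have htpos : ∀ n, 0 < t n := fun n => by positivity
      have ht1 : ∀ n, 1 ≤ t n := fun n => by
        simp only [htdef]; exact_mod_cast Nat.one_le_iff_ne_zero.2 (Nat.succ_ne_zero n)
      set w : ℕ → H := fun n => (t n)⁻¹ • proxf (t n • y) with hwdef
      have hmain : ∀ n, f (w n) ≤ ((a + σ : ℝ) : EReal) ∧
          ‖t n • y - proxf (t n • y)‖ ^ 2 ≤ 2 * t n * σ := by
        intro n
        obtain ⟨hzC, hfval⟩ := hkey (t n • y)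
        set z := t n • y - proxf (t n • y) with hzdef
        have hpz : proxf (t n • y) = t n • y - z := by rw [hzdef]; abel
        have hzy : ⟪z, y⟫_ℝ ≤ σ := hzσ z hzC
        -- norm bound
        have hpnorm : ‖proxf (t n • y)‖ ≤ ‖t n • y‖ := by
          rw [hnorm]
          have := Metric.infDist_le_dist_of_mem (x := t n • y) h0
          rwa [dist_zero_right] at this
        have hzsq : ‖z‖ ^ 2 ≤ 2 * t n * σ := by
          have hexp : ‖t n • y - z‖ ^ 2
              = ‖t n • y‖ ^ 2 - 2 * (t n * ⟪y, z⟫_ℝ) + ‖z‖ ^ 2 := by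
            rw [norm_sub_sq_real]
            congr 2
            rw [real_inner_comm, real_inner_smul_right, real_inner_comm]
          have hsq : ‖proxf (t n • y)‖ ^ 2 ≤ ‖t n • y‖ ^ 2 :=
            pow_le_pow_left₀ (norm_nonneg _) hpnorm 2
          rw [hpz] at hsq
          rw [hexp] at hsq
          have hyz : ⟪y, z⟫_ℝ ≤ σ := by rw [real_inner_comm]; exact hzy
          nlinarith [htpos n]
        constructor
        · -- value bound via convexity
          have hcv := hf.2.2.1 (proxf (t n • y)) 0 (t n)⁻¹ (1 - (t n)⁻¹)
            (by positivity) (by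
              have : (t n)⁻¹ ≤ 1 := inv_le_one_of_one_le₀ (ht1 n)
              linarith) (by ring)
          rw [smul_zero, add_zero] at hcv
          rw [hfval, hfa, ← EReal.coe_mul, ← EReal.coe_mul, ← EReal.coe_add] at hcv
          have hwn : w n = (t n)⁻¹ • proxf (t n • y) := rfl
          rw [← hwn] at hcv
          refine le_trans hcv ?_
          rw [EReal.coe_le_coe_iff]
          have hip : ⟪z, proxf (t n • y)⟫_ℝ = t n * ⟪z, y⟫_ℝ - ‖z‖ ^ 2 := by
            rw [hpz, inner_sub_right, real_inner_smul_right, real_inner_self_eq_norm_sq]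
          rw [hip]
          have h1 : (t n)⁻¹ * (t n * ⟪z, y⟫_ℝ - ‖z‖ ^ 2) ≤ σ := by
            have hinv : (t n)⁻¹ * (t n * ⟪z, y⟫_ℝ) = ⟪z, y⟫_ℝ := by
              rw [← mul_assoc, inv_mul_cancel₀ (htpos n).ne', one_mul]
            have hzn : 0 ≤ (t n)⁻¹ * ‖z‖ ^ 2 := by positivity
            calc (t n)⁻¹ * (t n * ⟪z, y⟫_ℝ - ‖z‖ ^ 2)
                = ⟪z, y⟫_ℝ - (t n)⁻¹ * ‖z‖ ^ 2 := by rw [mul_sub, hinv]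
              _ ≤ σ := by linarith
          nlinarith [h1, htpos n, inv_nonneg.2 (htpos n).le]
        · exact hzsq
      -- convergence of w to y
      have hwy : ∀ n, dist (w n) y ≤ Real.sqrt (2 * σ / t n) := by
        intro n
        have hd : dist (w n) y = (t n)⁻¹ * ‖t n • y - proxf (t n • y)‖ := by
          rw [dist_eq_norm, hwdef]
          have : (t n)⁻¹ • proxf (t n • y) - y
              = -((t n)⁻¹ • (t n • y - proxf (t n • y))) := by
            rw [smul_sub, smul_smul, inv_mul_cancel₀ (htpos n).ne', one_smul, neg_sub]
          rw [this, norm_neg, norm_smul, Real.norm_eq_abs, abs_of_pos (by positivity)]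
        rw [hd]
        rw [Real.le_sqrt (by positivity) (by positivity)]
        have := (hmain n).2
        rw [mul_pow]
        calc ((t n)⁻¹) ^ 2 * ‖t n • y - proxf (t n • y)‖ ^ 2
            ≤ ((t n)⁻¹) ^ 2 * (2 * t n * σ) := by
              apply mul_le_mul_of_nonneg_left this (by positivity)
          _ = 2 * σ / t n := by
              field_simp
      have htend0 : Filter.Tendsto (fun n => Real.sqrt (2 * σ / t n))
          Filter.atTop (nhds 0) := by
        have h1 : Filter.Tendsto (fun n : ℕ => 2 * σ / t n) Filter.atTop (nhds 0) := by
          have := (tendsto_const_div_atTop_nhds_zero_nat (2 * σ)).comp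
            (Filter.tendsto_add_atTop_nat 1)
          simpa [htdef, Function.comp_def] using this
        have h2 := h1.sqrt
        simpa using h2
      have hwtend : Filter.Tendsto w Filter.atTop (nhds y) := by
        rw [tendsto_iff_dist_tendsto_zero]
        exact squeeze_zero (fun n => dist_nonneg) hwy htend0
      -- conclude with lower semicontinuity
      by_contra hcon
      have hlt : suppFn C y + (a : EReal) < f y := not_le.1 hcon
      rw [hσ, ← EReal.coe_add] at hlt
      have hev := hf.2.2.2 y _ hlt
      obtain ⟨n, hn⟩ := (hwtend.eventually hev).exists
      have := (hmain n).1
      rw [show a + σ = σ + a from by ring] at this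
      exact hn.not_ge this
    · -- lower bound
      by_cases hyt : f y = ⊤
      · rw [hyt]; exact le_top
      set β := (f y).toReal with hβ
      have hfy : f y = (β : EReal) := (EReal.coe_toReal hyt (hf.2.1 y)).symm
      have hs : suppFn C y ≤ ((β - a : ℝ) : EReal) := by
        apply iSup_le
        rintro ⟨z, hz⟩
        have := hsub z hz y
        rw [hfy, EReal.coe_le_coe_iff] at this
        exact EReal.coe_le_coe_iff.2 (by linarith)
      calc suppFn C y + (a : EReal) ≤ ((β - a : ℝ) : EReal) + (a : EReal) :=
            add_le_add_left hs _
        _ = f y := by rw [← EReal.coe_add, hfy]; norm_num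
  · rintro ⟨c, hc⟩ x
    obtain ⟨v, hvC, hvdist⟩ :=
      exists_norm_eq_iInf_of_complete_convex hCne hCcl.isComplete hCco x
    have hvchar : ∀ w ∈ C, ⟪x - v, w - v⟫_ℝ ≤ 0 :=
      (norm_eq_iInf_iff_real_inner_le_zero hCco hvC).1 hvdist
    have hinf : Metric.infDist x C = ‖x - v‖ := by
      apply le_antisymm
      · have := Metric.infDist_le_dist_of_mem (x := x) hvC
        rwa [dist_eq_norm] at this
      · by_contra hlt
        push_neg at hlt
        obtain ⟨z, hz, hdz⟩ := (Metric.infDist_lt_iff hCne).1 hlt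
        have hbdd : BddBelow (Set.range fun w : C => ‖x - (w : H)‖) :=
          ⟨0, by rintro r ⟨w, rfl⟩; exact norm_nonneg _⟩
        have h1 : ‖x - v‖ ≤ ‖x - z‖ := by
          rw [hvdist]; exact ciInf_le hbdd ⟨z, hz⟩
        rw [dist_eq_norm] at hdz
        linarith
    have hsupp_p : suppFn C (x - v) = ((⟪v, x - v⟫_ℝ : ℝ) : EReal) := by
      apply le_antisymm
      · apply iSup_le
        rintro ⟨w, hw⟩
        apply EReal.coe_le_coe_iff.2
        have h1 := hvchar w hw
        have h2 : ⟪x - v, w - v⟫_ℝ = ⟪x - v, w⟫_ℝ - ⟪x - v, v⟫_ℝ := inner_sub_right _ _ _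
        have h3 : ⟪w, x - v⟫_ℝ = ⟪x - v, w⟫_ℝ := real_inner_comm _ _
        have h4 : ⟪v, x - v⟫_ℝ = ⟪x - v, v⟫_ℝ := real_inner_comm _ _
        linarith
      · exact le_iSup (fun z : C => ((⟪(z : H), x - v⟫_ℝ : ℝ) : EReal)) ⟨v, hvC⟩
    have hprox : IsProx f x (x - v) := by
      intro y
      rw [hc (x - v), hc y, hsupp_p]
      by_cases hyt : suppFn C y = ⊤
      · rw [hyt, EReal.top_add_coe, EReal.top_add_coe]; exact le_top
      have hybot : suppFn C y ≠ ⊥ := fun hb => by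
        have := hsupp_bot y; rw [hb] at this; exact (EReal.bot_lt_coe _).not_ge this
      set s := (suppFn C y).toReal with hsdef
      have hsy : suppFn C y = (s : EReal) := (EReal.coe_toReal hyt hybot).symm
      have hvy : ⟪v, y⟫_ℝ ≤ s := by
        have : ((⟪v, y⟫_ℝ : ℝ) : EReal) ≤ suppFn C y :=
          le_iSup (fun z : C => ((⟪(z : H), y⟫_ℝ : ℝ) : EReal)) ⟨v, hvC⟩
        rwa [hsy, EReal.coe_le_coe_iff] at this
      rw [hsy, ← EReal.coe_add, ← EReal.coe_add, ← EReal.coe_add, ← EReal.coe_add,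
        EReal.coe_le_coe_iff]
      rw [sub_sub_cancel]
      have hexp : ‖v - (x - y)‖ ^ 2 = ‖v‖ ^ 2 - 2 * ⟪v, x - y⟫_ℝ + ‖x - y‖ ^ 2 :=
        norm_sub_sq_real _ _
      have e1 : ⟪v, x - v⟫_ℝ = ⟪v, x⟫_ℝ - ‖v‖ ^ 2 := by
        rw [inner_sub_right, real_inner_self_eq_norm_sq]
      have e2 : ⟪v, x - y⟫_ℝ = ⟪v, x⟫_ℝ - ⟪v, y⟫_ℝ := inner_sub_right _ _ _
      nlinarith [sq_nonneg ‖v - (x - y)‖]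
    have hpx : proxf x = x - v := isProx_unique hf (hproxf x) hprox
    rw [hpx, hinf]
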